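/- For no positive integers n and m is J^n similar over ℚ to K^m, where J and K are the 5×5 matrices with characteristic polynomials (t-2)(t⁴-3t³+4t²-2t+1) and (t-2)(t⁴+t³+1) respectively. -/
import Mathlib

open Matrix

set_option maxRecDepth 100000

namespace Stmt12Aux

def Jz : Matrix (Fin 5) (Fin 5) ℤ :=
  !![1,1,0,0,0; 0,1,1,0,0; 0,0,1,1,0; 0,0,0,1,1; 1,0,0,0,1]
def Kz : Matrix (Fin 5) (Fin 5) ℤ :=
  !![0,1,1,0,0; 0,0,1,1,0; 1,0,0,0,1; 1,1,0,0,0; 0,0,0,1,1]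

def v : ℕ → ℤ
  | 0 => 4
  | 1 => 246
  | n + 2 => 123 * v (n+1) - v n

def w : ℕ → ℤ
  | 0 => 4
  | 1 => 6
  | 2 => -18
  | 3 => -300
  | n + 4 => 6 * w (n+3) - 27 * w (n+2) - 10 * w (n+1) - w n

lemma cubicJ0 : Jz ^ 30 =
    (1147 : ℤ) • Jz ^ 20 - (125953 : ℤ) • Jz ^ 10 + (1024 : ℤ) • 1 := by decide

lemma quinticK0 : Kz ^ 50 =
    (1030 : ℤ) • Kz ^ 40 - (6171 : ℤ) • Kz ^ 30 + (27638 : ℤ) • Kz ^ 20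
      + (10239 : ℤ) • Kz ^ 10 + (1024 : ℤ) • 1 := by decide

lemma cubicJ (N : ℕ) : Jz ^ (N + 30) =
    (1147 : ℤ) • Jz ^ (N + 20) - (125953 : ℤ) • Jz ^ (N + 10) + (1024 : ℤ) • Jz ^ N := by
  have h : Jz ^ (N + 30) = Jz ^ N * Jz ^ 30 := by rw [← pow_add]
  rw [h, cubicJ0]
  simp only [mul_add, mul_sub, mul_smul_comm, mul_one, ← pow_add]

lemma quinticK (N : ℕ) : Kz ^ (N + 50) =
    (1030 : ℤ) • Kz ^ (N + 40) - (6171 : ℤ) • Kz ^ (N + 30) + (27638 : ℤ) • Kz ^ (N + 20)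
      + (10239 : ℤ) • Kz ^ (N + 10) + (1024 : ℤ) • Kz ^ N := by
  have h : Kz ^ (N + 50) = Kz ^ N * Kz ^ 50 := by rw [← pow_add]
  rw [h, quinticK0]
  simp only [mul_add, mul_sub, mul_smul_comm, mul_one, ← pow_add]

lemma traceJ10 : ∀ N : ℕ, Matrix.trace (Jz ^ (10 * N)) = 1024 ^ N + v N := by
  intro N
  induction N using Nat.strong_induction_on with
  | _ N ih =>
    match N with
    | 0 => decide
    | 1 => decide
    | 2 => decide
    | (M + 3) =>
      have h0 := ih M (by omega)
      have h1 := ih (M + 1) (by omega)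
      have h2 := ih (M + 2) (by omega)
      have e3 : 10 * (M + 3) = 10 * M + 30 := by ring
      have e2 : 10 * M + 20 = 10 * (M + 2) := by ring
      have e1 : 10 * M + 10 = 10 * (M + 1) := by ring
      have key := cubicJ (10 * M)
      have tkey : Matrix.trace (Jz ^ (10 * M + 30)) =
          1147 * Matrix.trace (Jz ^ (10 * M + 20))
            - 125953 * Matrix.trace (Jz ^ (10 * M + 10))
            + 1024 * Matrix.trace (Jz ^ (10 * M)) := by
        rw [key]
        simp only [Matrix.trace_add, Matrix.trace_sub, Matrix.trace_smul, smul_eq_mul]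
      rw [e3, tkey, e2, e1, h0, h1, h2]
      simp only [v]
      simp only [pow_succ]
      ring

lemma traceK10 : ∀ N : ℕ, Matrix.trace (Kz ^ (10 * N)) = 1024 ^ N + w N := by
  intro N
  induction N using Nat.strong_induction_on with
  | _ N ih =>
    match N with
    | 0 => decide
    | 1 => decide
    | 2 => decide
    | 3 => decide
    | 4 => decide
    | (M + 5) =>
      have h0 := ih M (by omega)
      have h1 := ih (M + 1) (by omega)
      have h2 := ih (M + 2) (by omega)
      have h3 := ih (M + 3) (by omega)
      have h4 := ih (M + 4) (by omega)
      have e5 : 10 * (M + 5) = 10 * M + 50 := by ring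
      have e4 : 10 * M + 40 = 10 * (M + 4) := by ring
      have e3 : 10 * M + 30 = 10 * (M + 3) := by ring
      have e2 : 10 * M + 20 = 10 * (M + 2) := by ring
      have e1 : 10 * M + 10 = 10 * (M + 1) := by ring
      have key := quinticK (10 * M)
      have tkey : Matrix.trace (Kz ^ (10 * M + 50)) =
          1030 * Matrix.trace (Kz ^ (10 * M + 40))
            - 6171 * Matrix.trace (Kz ^ (10 * M + 30))
            + 27638 * Matrix.trace (Kz ^ (10 * M + 20))
            + 10239 * Matrix.trace (Kz ^ (10 * M + 10))
            + 1024 * Matrix.trace (Kz ^ (10 * M)) := by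
        rw [key]
        simp only [Matrix.trace_add, Matrix.trace_sub, Matrix.trace_smul, smul_eq_mul]
      rw [e5, tkey, e4, e3, e2, e1, h0, h1, h2, h3, h4]
      simp only [w]
      simp only [pow_succ]
      ring

lemma vgrow : ∀ N : ℕ, 4 * 61 ^ N ≤ v N ∧ 61 * v N ≤ v (N + 1) := by
  intro N
  induction N with
  | zero => constructor <;> norm_num [v]
  | succ M ih =>
    obtain ⟨hb, hs⟩ := ih
    have hp : (0 : ℤ) < 61 ^ M := by positivity
    have hv2 : v (M + 2) = 123 * v (M + 1) - v M := by simp [v]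
    constructor
    · have : 61 * (4 * 61 ^ M) ≤ 61 * v M := by nlinarith
      calc (4 : ℤ) * 61 ^ (M + 1) = 61 * (4 * 61 ^ M) := by ring
        _ ≤ 61 * v M := this
        _ ≤ v (M + 1) := hs
    · rw [hv2]
      nlinarith

lemma wbound : ∀ N : ℕ, -(4 * 10 ^ N) ≤ w N ∧ w N ≤ 4 * 10 ^ N := by
  intro N
  induction N using Nat.strong_induction_on with
  | _ N ih =>
    match N with
    | 0 => constructor <;> norm_num [w]
    | 1 => constructor <;> norm_num [w]
    | 2 => constructor <;> norm_num [w]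
    | 3 => constructor <;> norm_num [w]
    | (M + 4) =>
      obtain ⟨l0, u0⟩ := ih M (by omega)
      obtain ⟨l1, u1⟩ := ih (M + 1) (by omega)
      obtain ⟨l2, u2⟩ := ih (M + 2) (by omega)
      obtain ⟨l3, u3⟩ := ih (M + 3) (by omega)
      have hw : w (M + 4) = 6 * w (M+3) - 27 * w (M+2) - 10 * w (M+1) - w M := by simp [w]
      have hp : (0 : ℤ) < 10 ^ M := by positivity
      rw [hw]
      simp only [pow_succ] at *
      constructor <;> nlinarith

lemma trace_lt (n : ℕ) (hn : 0 < n) :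
    Matrix.trace (Kz ^ (10 * n)) < Matrix.trace (Jz ^ (10 * n)) := by
  rw [traceJ10, traceK10]
  have h1 := (vgrow n).1
  have h2 := (wbound n).2
  have h3 : (10 : ℤ) ^ n < 61 ^ n := by
    apply pow_lt_pow_left₀ (by norm_num) (by norm_num)
    omega
  linarith

lemma Jcast :
    (!![1,1,0,0,0; 0,1,1,0,0; 0,0,1,1,0; 0,0,0,1,1; 1,0,0,0,1] : Matrix (Fin 5) (Fin 5) ℚ)
      = (Int.castRingHom ℚ).mapMatrix Jz := by
  ext i j
  fin_cases i <;> fin_cases j <;>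
    norm_num [Jz, RingHom.mapMatrix_apply, Matrix.map_apply]

lemma Kcast :
    (!![0,1,1,0,0; 0,0,1,1,0; 1,0,0,0,1; 1,1,0,0,0; 0,0,0,1,1] : Matrix (Fin 5) (Fin 5) ℚ)
      = (Int.castRingHom ℚ).mapMatrix Kz := by
  ext i j
  fin_cases i <;> fin_cases j <;>
    norm_num [Kz, RingHom.mapMatrix_apply, Matrix.map_apply]

lemma trace_cast (A : Matrix (Fin 5) (Fin 5) ℤ) :
    Matrix.trace ((Int.castRingHom ℚ).mapMatrix A) = ((Matrix.trace A : ℤ) : ℚ) := by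
  simp [Matrix.trace, Matrix.diag, RingHom.mapMatrix_apply, Matrix.map_apply]

lemma detJz : Jz.det = 2 := by decide
lemma detKz : Kz.det = 2 := by decide

end Stmt12Aux

open Stmt12Aux

/-- No positive powers of the 5×5 matrices `J` and `K` are similar over `ℚ`. -/
theorem stmt12 :
    let J : Matrix (Fin 5) (Fin 5) ℚ :=
      !![1,1,0,0,0; 0,1,1,0,0; 0,0,1,1,0; 0,0,0,1,1; 1,0,0,0,1]
    let K : Matrix (Fin 5) (Fin 5) ℚ :=
      !![0,1,1,0,0; 0,0,1,1,0; 1,0,0,0,1; 1,1,0,0,0; 0,0,0,1,1]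
    ¬ ∃ (n m : ℕ) (P : Matrix (Fin 5) (Fin 5) ℚ),
        0 < n ∧ 0 < m ∧ IsUnit P.det ∧ J ^ n = P * K ^ m * P⁻¹ := by
  intro J K
  rintro ⟨n, m, P, hn, hm, hPd, hsim⟩
  have hJ : J = (Int.castRingHom ℚ).mapMatrix Jz := Jcast
  have hK : K = (Int.castRingHom ℚ).mapMatrix Kz := Kcast
  have hPu : IsUnit P := (Matrix.isUnit_iff_isUnit_det P).mpr hPd
  obtain ⟨u, rfl⟩ := hPu
  set U : Matrix (Fin 5) (Fin 5) ℚ := (u : Matrix (Fin 5) (Fin 5) ℚ) with hU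
  set V : Matrix (Fin 5) (Fin 5) ℚ := ((u⁻¹ : (Matrix (Fin 5) (Fin 5) ℚ)ˣ) : Matrix (Fin 5) (Fin 5) ℚ) with hV
  have hUV : U * V = 1 := u.mul_inv
  have hVU : V * U = 1 := u.inv_mul
  have hsim' : J ^ n = U * K ^ m * V := by
    rw [hsim, hU, hV, Matrix.coe_units_inv]
  -- determinants give n = m
  have hdetJ : J.det = 2 := by
    rw [hJ, ← RingHom.map_det, detJz]; norm_num
  have hdetK : K.det = 2 := by
    rw [hK, ← RingHom.map_det, detKz]; norm_num
  have hdet : (2 : ℚ) ^ n = (2 : ℚ) ^ m := by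
    have h1 : (J ^ n).det = U.det * (K ^ m).det * V.det := by
      rw [hsim', Matrix.det_mul, Matrix.det_mul]
    have h2 : U.det * V.det = 1 := by
      rw [← Matrix.det_mul, hUV, Matrix.det_one]
    have h3 : (J ^ n).det = (K ^ m).det := by
      calc (J ^ n).det = (K ^ m).det * (U.det * V.det) := by rw [h1]; ring
        _ = (K ^ m).det := by rw [h2, mul_one]
    rwa [Matrix.det_pow, Matrix.det_pow, hdetJ, hdetK] at h3
  have hnm : n = m := by
    have hcast : ((2 ^ n : ℕ) : ℚ) = ((2 ^ m : ℕ) : ℚ) := by push_cast; exact hdet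
    exact Nat.pow_right_injective (by norm_num) (Nat.cast_injective hcast)
  subst hnm
  -- conjugation at the 10n-th power
  have h10 : J ^ (10 * n) = U * K ^ (10 * n) * V := by
    have h1 : J ^ (10 * n) = (J ^ n) ^ 10 := by rw [← pow_mul, Nat.mul_comm]
    have h2 : K ^ (10 * n) = (K ^ n) ^ 10 := by rw [← pow_mul, Nat.mul_comm]
    have h3 := Units.conj_pow u (K ^ n) 10
    rw [h1, h2, hsim', hU, hV, Matrix.coe_units_inv] at *
    exact h3
  have htr : Matrix.trace (J ^ (10 * n)) = Matrix.trace (K ^ (10 * n)) := by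
    rw [h10, Matrix.trace_mul_comm, ← Matrix.mul_assoc, hVU, Matrix.one_mul]
  -- transport to ℤ
  have htrz : Matrix.trace (Jz ^ (10 * n)) = Matrix.trace (Kz ^ (10 * n)) := by
    have e1 : Matrix.trace (J ^ (10 * n)) = ((Matrix.trace (Jz ^ (10 * n)) : ℤ) : ℚ) := by
      rw [hJ, ← map_pow, trace_cast]
    have e2 : Matrix.trace (K ^ (10 * n)) = ((Matrix.trace (Kz ^ (10 * n)) : ℤ) : ℚ) := by
      rw [hK, ← map_pow, trace_cast]
    rw [e1, e2] at htr
    exact_mod_cast htr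
  have hlt := trace_lt n hn
  rw [htrz] at hlt
  exact lt_irrefl _ hlt
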